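/- Let L : ℝ → ℝ be an additive function with dense graph in ℝ² (e.g. a Hamel-basis construction), and let n ≥ 2. Then f(x) = x^{n-1} L(x) is an n-monomial whose graph closure is all of ℝ²; equivalently sup_{h ∈ [1,2]} f(h)/h^n = +∞ and inf_{h ∈ [1,2]} f(h)/h^n = -∞. -/

import Mathlib

noncomputable def fdiff (h : ℝ) (f : ℝ → ℝ) : ℝ → ℝ := fun x => f (x + h) - f x

def IsMonomial (n : ℕ) (f : ℝ → ℝ) : Prop :=
  ∀ x h : ℝ, (1 / (n.factorial : ℝ)) * ((fdiff h)^[n] f) x = f h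

lemma fdiff_iter_zero (h : ℝ) (m : ℕ) : (fdiff h)^[m] (fun _ => (0:ℝ)) = fun _ => 0 := by
  induction m with
  | zero => rfl
  | succ m ih =>
    rw [Function.iterate_succ_apply', ih]
    funext x; simp [fdiff]

lemma fdiff_iter_sum (h : ℝ) (m : ℕ) (s : Finset ℕ) (f : ℕ → ℝ → ℝ) :
    (fdiff h)^[m] (fun x => ∑ i ∈ s, f i x) = fun x => ∑ i ∈ s, ((fdiff h)^[m] (f i)) x := by
  induction m generalizing f with
  | zero => rfl
  | succ m ih =>
    rw [Function.iterate_succ_apply]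
    have : fdiff h (fun x => ∑ i ∈ s, f i x) = fun x => ∑ i ∈ s, fdiff h (f i) x := by
      funext x; simp [fdiff, Finset.sum_sub_distrib]
    rw [this, ih]
    funext x
    refine Finset.sum_congr rfl fun i _ => ?_
    rw [Function.iterate_succ_apply]

lemma fdiff_iter_const_mul (h c : ℝ) (m : ℕ) (f : ℝ → ℝ) :
    (fdiff h)^[m] (fun x => c * f x) = fun x => c * ((fdiff h)^[m] f) x := by
  induction m generalizing f with
  | zero => rfl
  | succ m ih =>
    rw [Function.iterate_succ_apply]
    have : fdiff h (fun x => c * f x) = fun x => c * fdiff h f x := by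
      funext x; simp [fdiff]; ring
    rw [this, ih]
    funext x
    rw [Function.iterate_succ_apply]

lemma fdiff_pow (h : ℝ) (k : ℕ) :
    fdiff h (fun x => x ^ k) =
      fun x => ∑ j ∈ Finset.range k, (k.choose j : ℝ) * h ^ (k - j) * x ^ j := by
  funext x
  simp only [fdiff]
  rw [add_pow, Finset.sum_range_succ]
  simp only [Nat.choose_self, Nat.sub_self, pow_zero, Nat.cast_one, mul_one, one_mul]
  rw [add_sub_cancel_right]
  refine Finset.sum_congr rfl fun j _ => ?_
  ring

lemma iter_pow (h : ℝ) : ∀ k : ℕ,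
    ((fdiff h)^[k] (fun x => x ^ k) = fun _ => (k.factorial : ℝ) * h ^ k) ∧
    (∀ m : ℕ, k < m → (fdiff h)^[m] (fun x => x ^ k) = fun _ => 0) := by
  intro k
  induction k using Nat.strong_induction_on with
  | _ k ih =>
    match k with
    | 0 =>
      constructor
      · funext x; simp
      · intro m hm
        obtain ⟨m', rfl⟩ : ∃ m', m = m' + 1 := ⟨m - 1, (Nat.succ_pred_eq_of_pos hm).symm⟩
        rw [Function.iterate_succ_apply]
        have : fdiff h (fun x : ℝ => x ^ 0) = fun _ => (0:ℝ) := by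
          funext x; simp [fdiff]
        rw [this, fdiff_iter_zero]
    | (k' + 1) =>
      have key : ∀ m' : ℕ, (fdiff h)^[m' + 1] (fun x => x ^ (k' + 1)) =
          fun x => ∑ j ∈ Finset.range (k' + 1),
            (((k' + 1).choose j : ℝ) * h ^ (k' + 1 - j)) * ((fdiff h)^[m'] (fun y => y ^ j)) x := by
        intro m'
        rw [Function.iterate_succ_apply, fdiff_pow]
        have : (fun x => ∑ j ∈ Finset.range (k' + 1),
            ((k' + 1).choose j : ℝ) * h ^ (k' + 1 - j) * x ^ j) =
            fun x => ∑ j ∈ Finset.range (k' + 1),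
            (((k' + 1).choose j : ℝ) * h ^ (k' + 1 - j)) * (fun y : ℝ => y ^ j) x := by
          funext x; simp
        rw [this, fdiff_iter_sum]
        funext x
        refine Finset.sum_congr rfl fun j _ => ?_
        rw [fdiff_iter_const_mul]
      constructor
      · rw [key k', ]
        funext x
        rw [Finset.sum_range_succ]
        have h1 : ∀ j ∈ Finset.range k',
            (((k' + 1).choose j : ℝ) * h ^ (k' + 1 - j)) * ((fdiff h)^[k'] (fun y => y ^ j)) x = 0 := by
          intro j hj
          rw [Finset.mem_range] at hj
          rw [(ih j (by omega)).2 k' hj]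
          simp
        rw [Finset.sum_eq_zero h1, zero_add, (ih k' (by omega)).1,
          Nat.choose_succ_self_right, show k' + 1 - k' = 1 from by omega, Nat.factorial_succ]
        push_cast
        ring
      · intro m hm
        obtain ⟨m', rfl⟩ : ∃ m', m = m' + 1 := ⟨m - 1, (Nat.succ_pred_eq_of_pos (by omega)).symm⟩
        rw [key m']
        funext x
        refine Finset.sum_eq_zero fun j hj => ?_
        rw [Finset.mem_range] at hj
        rw [(ih j (by omega)).2 m' (by omega)]
        simp

lemma prod_lemma (L : ℝ → ℝ) (hadd : ∀ x y : ℝ, L (x + y) = L x + L y) (h : ℝ) (P : ℝ → ℝ) :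
    ∀ m : ℕ, (fdiff h)^[m + 1] (fun x => P x * L x) =
      fun x => ((fdiff h)^[m + 1] P) x * L x + (m + 1 : ℝ) * ((fdiff h)^[m] P) (x + h) * L h := by
  intro m
  induction m with
  | zero =>
    funext x
    simp only [zero_add, Nat.cast_zero, Function.iterate_one, Function.iterate_zero, id_eq]
    simp only [fdiff, hadd]
    ring
  | succ m ih =>
    rw [Function.iterate_succ_apply', ih]
    funext x
    simp only [fdiff, hadd]
    have e1 : ((fdiff h)^[m + 1 + 1] P) x = ((fdiff h)^[m+1] P) (x + h) - ((fdiff h)^[m+1] P) x := by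
      rw [Function.iterate_succ_apply']; rfl
    have e2 : ((fdiff h)^[m + 1] P) (x + h) =
        ((fdiff h)^[m] P) (x + h + h) - ((fdiff h)^[m] P) (x + h) := by
      rw [Function.iterate_succ_apply']; rfl
    rw [e1, e2]
    push_cast
    ring

theorem stmt16 (L : ℝ → ℝ) (hadd : ∀ x y : ℝ, L (x + y) = L x + L y)
    (hdense : Dense {p : ℝ × ℝ | p.2 = L p.1}) (n : ℕ) (hn : 2 ≤ n) :
    IsMonomial n (fun x => x ^ (n - 1) * L x) ∧
    closure {p : ℝ × ℝ | p.2 = p.1 ^ (n - 1) * L p.1} = Set.univ ∧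
    (∀ M : ℝ, ∃ h ∈ Set.Icc (1 : ℝ) 2, M < h ^ (n - 1) * L h / h ^ n) ∧
    (∀ M : ℝ, ∃ h ∈ Set.Icc (1 : ℝ) 2, h ^ (n - 1) * L h / h ^ n < M) := by
  obtain ⟨k, rfl⟩ : ∃ k, n = k + 2 := ⟨n - 2, by omega⟩
  have hsub : k + 2 - 1 = k + 1 := rfl
  refine ⟨?_, ?_, ?_, ?_⟩
  · -- monomial
    intro x h
    have := prod_lemma L hadd h (fun x => x ^ (k + 1)) (k + 1)
    simp only [hsub]
    rw [this]
    rw [(iter_pow h (k + 1)).2 (k + 2) (by omega), (iter_pow h (k + 1)).1]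
    have hfac : ((k + 2).factorial : ℝ) = (k + 2) * ((k + 1).factorial : ℝ) := by
      rw [Nat.factorial_succ]; push_cast; ring
    have hne : ((k + 2).factorial : ℝ) ≠ 0 := by positivity
    rw [hfac]
    field_simp [hfac]
    push_cast
    ring
  · -- closure = univ
    set G := {p : ℝ × ℝ | p.2 = p.1 ^ (k + 2 - 1) * L p.1} with hG
    have h1 : ∀ a b : ℝ, a ≠ 0 → (a, b) ∈ closure G := by
      intro a b ha
      have hφ : Continuous (fun p : ℝ × ℝ => (p.1, p.1 ^ (k + 1) * p.2)) := by fun_prop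
      have himg : (fun p : ℝ × ℝ => (p.1, p.1 ^ (k + 1) * p.2)) ''
          {p : ℝ × ℝ | p.2 = L p.1} ⊆ G := by
        rintro _ ⟨p, hp, rfl⟩
        simp only [hG, Set.mem_setOf_eq, hsub]
        rw [hp]
      have hmem : (a, b / a ^ (k + 1)) ∈ closure {p : ℝ × ℝ | p.2 = L p.1} := by
        rw [hdense.closure_eq]; trivial
      have := (image_closure_subset_closure_image hφ) ⟨_, hmem, rfl⟩
      have heq : (fun p : ℝ × ℝ => (p.1, p.1 ^ (k + 1) * p.2)) (a, b / a ^ (k + 1)) = (a, b) := by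
        simp only
        rw [mul_div_cancel₀ _ (pow_ne_zero _ ha)]
      rw [heq] at this
      exact closure_mono himg this
    have hd : Dense (closure G) := by
      have hd0 : Dense ({(0:ℝ)}ᶜ ×ˢ (Set.univ : Set ℝ)) :=
        (dense_compl_singleton (0:ℝ)).prod dense_univ
      refine hd0.mono ?_
      rintro ⟨a, b⟩ ⟨ha, -⟩
      exact h1 a b ha
    rw [← closure_closure (s := G), hd.closure_eq]
  · -- sup
    intro M
    have hopen : IsOpen (Set.Ioo (1:ℝ) 2 ×ˢ Set.Ioi (max (2*M) 0 + 1)) :=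
      isOpen_Ioo.prod isOpen_Ioi
    have hne : (Set.Ioo (1:ℝ) 2 ×ˢ Set.Ioi (max (2*M) 0 + 1)).Nonempty :=
      ⟨(3/2, max (2*M) 0 + 2), by constructor <;> simp <;> norm_num⟩
    obtain ⟨p, hpS, hpU⟩ := hdense.exists_mem_open hopen hne
    obtain ⟨⟨h1, h2⟩, h3⟩ := hpU
    refine ⟨p.1, ⟨le_of_lt h1, le_of_lt h2⟩, ?_⟩
    have hpos : (0:ℝ) < p.1 := by linarith
    have hLp : L p.1 = p.2 := hpS.symm
    have hval : p.1 ^ (k + 2 - 1) * L p.1 / p.1 ^ (k + 2) = L p.1 / p.1 := by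
      rw [hsub, pow_succ]
      field_simp
      ring
    rw [hval, hLp, lt_div_iff₀ hpos]
    have := le_max_left (2*M) 0
    have := le_max_right (2*M) 0
    rw [Set.mem_Ioi] at h3
    nlinarith
  · -- inf
    intro M
    have hopen : IsOpen (Set.Ioo (1:ℝ) 2 ×ˢ Set.Iio (min (2*M) 0 - 1)) :=
      isOpen_Ioo.prod isOpen_Iio
    have hne : (Set.Ioo (1:ℝ) 2 ×ˢ Set.Iio (min (2*M) 0 - 1)).Nonempty :=
      ⟨(3/2, min (2*M) 0 - 2), by constructor <;> simp <;> norm_num⟩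
    obtain ⟨p, hpS, hpU⟩ := hdense.exists_mem_open hopen hne
    obtain ⟨⟨h1, h2⟩, h3⟩ := hpU
    refine ⟨p.1, ⟨le_of_lt h1, le_of_lt h2⟩, ?_⟩
    have hpos : (0:ℝ) < p.1 := by linarith
    have hLp : L p.1 = p.2 := hpS.symm
    have hval : p.1 ^ (k + 2 - 1) * L p.1 / p.1 ^ (k + 2) = L p.1 / p.1 := by
      rw [hsub, pow_succ]
      field_simp
      ring
    rw [hval, hLp, div_lt_iff₀ hpos]
    have := min_le_left (2*M) 0
    have := min_le_right (2*M) 0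
    rw [Set.mem_Iio] at h3
    nlinarith
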